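/- The Floyd–Warshall update rule computes reachability: if for each vertex c (in any fixed order) one replaces path(a,b) by path(a,b) ∨ (path(a,c) ∧ path(c,b)) for all a, b, then after processing all vertices, path(a,b) holds iff there is a directed path from a to b in the original graph. -/

import Mathlib

/-- The stages of the Floyd–Warshall algorithm: `floydWarshall edge k` is the
reachability relation after eliminating the first `k` vertices as intermediate
vertices. -/
def floydWarshall {n : ℕ} (edge : Fin n → Fin n → Prop) : ℕ → Fin n → Fin n → Prop
  | 0, a, b => edge a b
  | k + 1, a, b => floydWarshall edge k a b ∨
      ∃ c : Fin n, (c : ℕ) = k ∧ floydWarshall edge k a c ∧ floydWarshall edge k c b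

private lemma fw_transGen {n : ℕ} (edge : Fin n → Fin n → Prop) :
    ∀ k a b, floydWarshall edge k a b → Relation.TransGen edge a b := by
  intro k
  induction k with
  | zero => intro a b h; exact Relation.TransGen.single h
  | succ k ih =>
    intro a b h
    rcases h with h | ⟨c, _, h1, h2⟩
    · exact ih _ _ h
    · exact (ih _ _ h1).trans (ih _ _ h2)

private lemma fw_absorb {n : ℕ} (edge : Fin n → Fin n → Prop) {k : ℕ} {a c : Fin n}
    (hc : (c : ℕ) = k) (h : floydWarshall edge (k + 1) c a) : floydWarshall edge k c a := by
  rcases h with h | ⟨c', hc', h1, h2⟩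
  · exact h
  · have : c' = c := Fin.ext (by omega)
    subst this; exact h2

private lemma first_occ {n : ℕ} {k : ℕ} :
    ∀ l : List (Fin n), (∃ x ∈ l, (x : ℕ) = k) →
      ∃ (l1 : List (Fin n)) (c : Fin n) (l2 : List (Fin n)), l = l1 ++ c :: l2 ∧ (c : ℕ) = k ∧ ∀ x ∈ l1, (x : ℕ) ≠ k := by
  intro l
  induction l with
  | nil => rintro ⟨x, hx, _⟩; exact absurd hx List.not_mem_nil
  | cons y l ih =>
    intro h
    by_cases hy : (y : ℕ) = k
    · exact ⟨[], y, l, rfl, hy, by simp⟩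
    · have : ∃ x ∈ l, (x : ℕ) = k := by
        rcases h with ⟨x, hx, hxk⟩
        rcases List.mem_cons.mp hx with rfl | hx
        · exact absurd hxk hy
        · exact ⟨x, hx, hxk⟩
      obtain ⟨l1, c, l2, rfl, hck, hl1⟩ := ih this
      refine ⟨y :: l1, c, l2, rfl, hck, ?_⟩
      intro x hx
      rcases List.mem_cons.mp hx with rfl | hx
      · exact hy
      · exact hl1 x hx

private lemma walk_fw_succ {n : ℕ} (edge : Fin n → Fin n → Prop) (k : ℕ)
    (IHk : ∀ (l : List (Fin n)) a b, List.Chain edge a (l ++ [b]) →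
      (∀ x ∈ l, (x : ℕ) < k) → floydWarshall edge k a b) :
    ∀ m (l : List (Fin n)) a b, l.length ≤ m → List.Chain edge a (l ++ [b]) →
      (∀ x ∈ l, (x : ℕ) < k + 1) → floydWarshall edge (k + 1) a b := by
  intro m
  induction m with
  | zero =>
    intro l a b hlen hch hlt
    have : l = [] := List.eq_nil_of_length_eq_zero (Nat.le_zero.mp hlen)
    subst this
    exact Or.inl (IHk [] a b hch (by simp))
  | succ m ih =>
    intro l a b hlen hch hlt
    by_cases hall : ∀ x ∈ l, (x : ℕ) < k
    · exact Or.inl (IHk l a b hch hall)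
    · push_neg at hall
      obtain ⟨x, hx, hxk⟩ := hall
      have hxeq : (x : ℕ) = k := by have := hlt x hx; omega
      obtain ⟨l1, c, l2, rfl, hck, hl1⟩ := first_occ (k := k) _ ⟨x, hx, hxeq⟩
      rw [List.append_assoc, List.cons_append] at hch
      rw [List.Chain, List.isChain_cons_split] at hch
      obtain ⟨hch1, hch2⟩ := hch
      have hfw1 : floydWarshall edge k a c := by
        refine IHk l1 a c hch1 ?_
        intro y hy
        have h1 := hlt y (by simp [hy])
        have h2 := hl1 y hy
        omega
      have hfw2 : floydWarshall edge (k + 1) c b := by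
        refine ih l2 c b ?_ hch2 ?_
        · have := hlen
          simp [List.length_append] at this ⊢
          omega
        · intro y hy
          exact hlt y (by simp [hy])
      exact Or.inr ⟨c, hck, hfw1, fw_absorb edge hck hfw2⟩

private lemma walk_fw {n : ℕ} (edge : Fin n → Fin n → Prop) :
    ∀ k (l : List (Fin n)) a b, List.Chain edge a (l ++ [b]) →
      (∀ x ∈ l, (x : ℕ) < k) → floydWarshall edge k a b := by
  intro k
  induction k with
  | zero =>
    intro l a b hch hlt
    match l with
    | [] =>
      simp only [List.nil_append, List.chain_cons, List.isChain_cons_cons] at hch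
      exact (List.isChain_cons_cons.mp hch).1
    | x :: l => exact absurd (hlt x List.mem_cons_self) (by omega)
  | succ k ih =>
    intro l a b hch hlt
    exact walk_fw_succ edge k ih l.length l a b le_rfl hch hlt

/-- The Floyd–Warshall update rule computes reachability: after processing all
`n` vertices, `path(a,b)` holds iff there is a nonempty directed path from `a`
to `b` in the original graph, i.e. the transitive closure of the edge
relation. -/
theorem stmt_7 {n : ℕ} (edge : Fin n → Fin n → Prop) (a b : Fin n) :
    floydWarshall edge n a b ↔ Relation.TransGen edge a b := by
  constructor
  · exact fw_transGen edge n a b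
  · intro h
    have : ∃ l : List (Fin n), List.Chain edge a (l ++ [b]) := by
      induction h with
      | single hab => exact ⟨[], List.Chain.cons hab List.Chain.nil⟩
      | tail _ hbc ih =>
        obtain ⟨l, hl⟩ := ih
        rename_i c _ _
        refine ⟨l ++ [c], ?_⟩
        rw [List.append_assoc, List.cons_append, List.Chain, List.isChain_cons_split]
        exact ⟨hl, List.Chain.cons hbc List.Chain.nil⟩
    obtain ⟨l, hl⟩ := this
    exact walk_fw edge n l a b hl (fun x _ => x.isLt)
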